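/- Let T be a G-tree and let g, h ∈ G be hyperbolic elements such that C_g ∩ C_h is nonempty, bounded, contains at least two points, and ℓ_T(gh) > ℓ_T(gh⁻¹) (i.e. the axes of g and h intersect in an arc of finite positive length and the induced orientations agree). Then there exist positive integers A and B such that for all integers a ≥ A and b ≥ B, the pair (g^a, h^b) is a good pair for ℓ_T. -/

import Mathlib

/-- A real tree: a nonempty complete geodesic 0-hyperbolic metric space. -/
def IsRealTree (T : Type*) [MetricSpace T] : Prop :=
  Nonempty T ∧ CompleteSpace T ∧
  (∀ x y : T, ∃ f : ℝ → T, f 0 = x ∧ f (dist x y) = y ∧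
    ∀ s ∈ Set.Icc (0 : ℝ) (dist x y), ∀ t ∈ Set.Icc (0 : ℝ) (dist x y),
      dist (f s) (f t) = |s - t|) ∧
  (∀ x y z w : T, dist x y + dist z w ≤
    max (dist x z + dist y w) (dist x w + dist y z))

/-- `σ : T → G → T` is a right action of `G` on `T` by isometries. -/
def IsIsomRightAction {G : Type*} [Group G] {T : Type*} [MetricSpace T]
    (σ : T → G → T) : Prop :=
  (∀ p : T, σ p 1 = p) ∧
  (∀ (p : T) (g h : G), σ p (g * h) = σ (σ p g) h) ∧
  (∀ g : G, Isometry (fun p : T => σ p g))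

/-- The translation length function of the action `σ`: `ℓ(g) = inf_p d(p, p·g)`. -/
noncomputable def transLen {G : Type*} [Group G] {T : Type*} [MetricSpace T]
    (σ : T → G → T) (g : G) : ℝ :=
  ⨅ p : T, dist p (σ p g)

/-- The characteristic set `C_g = {p : d(p, p·g) = ℓ(g)}` of `g`. -/
def charSet {G : Type*} [Group G] {T : Type*} [MetricSpace T]
    (σ : T → G → T) (g : G) : Set T :=
  {p : T | dist p (σ p g) = transLen σ g}

/-- The segment `[p,q] = {z : d(p,z) + d(z,q) = d(p,q)}`. -/
def treeSegment {T : Type*} [MetricSpace T] (p q : T) : Set T :=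
  {z : T | dist p z + dist z q = dist p q}

/-- `(x,y)` is a good pair for `ℓ` if `0 < ℓ(x)+ℓ(y)−ℓ(xy⁻¹) < 2·min{ℓ(x),ℓ(y)}`. -/
def GoodPair {G : Type*} [Group G] (ℓ : G → ℝ) (g h : G) : Prop :=
  0 < ℓ g + ℓ h - ℓ (g * h⁻¹) ∧
  ℓ g + ℓ h - ℓ (g * h⁻¹) < 2 * min (ℓ g) (ℓ h)

section Aux
variable {G : Type*} [Group G] {T : Type*} [MetricSpace T] {σ : T → G → T}

lemma act_isom (hσ : IsIsomRightAction σ) (u : G) (p q : T) :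
    dist (σ p u) (σ q u) = dist p q :=
  (hσ.2.2 u).dist_eq p q

lemma act_pair (hσ : IsIsomRightAction σ) (p : T) (α β : G) :
    dist (σ p α) (σ p β) = dist p (σ p (β * α⁻¹)) := by
  have h := act_isom hσ α⁻¹ (σ p α) (σ p β)
  rw [← hσ.2.1, ← hσ.2.1, mul_inv_cancel, hσ.1] at h
  exact h.symm

lemma act_dist_inv (hσ : IsIsomRightAction σ) (p : T) (u : G) :
    dist p (σ p u⁻¹) = dist p (σ p u) := by
  have h := act_pair hσ p u⁻¹ 1
  rw [hσ.1, one_mul, inv_inv] at h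
  rw [dist_comm] at h
  exact h

lemma transLen_le (p : T) (u : G) : transLen σ u ≤ dist p (σ p u) := by
  haveI : Nonempty T := ⟨p⟩
  exact ciInf_le ⟨0, fun r hr => by obtain ⟨q, rfl⟩ := hr; exact dist_nonneg⟩ p

lemma le_transLen [Nonempty T] {c : ℝ} {u : G} (h : ∀ p : T, c ≤ dist p (σ p u)) :
    c ≤ transLen σ u := le_ciInf h

lemma transLen_inv (hσ : IsIsomRightAction σ) (u : G) :
    transLen σ u⁻¹ = transLen σ u := by
  unfold transLen
  exact iInf_congr fun p => act_dist_inv hσ p u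

end Aux

section Tree
variable {T : Type*} [MetricSpace T]

/-- Gromov product. -/
noncomputable def gp (x a b : T) : ℝ := (dist x a + dist x b - dist a b) / 2

lemma gp_nonneg (x a b : T) : 0 ≤ gp x a b := by
  have h := dist_triangle a x b
  have e := dist_comm a x
  unfold gp; linarith

lemma gp_le_left (x a b : T) : gp x a b ≤ dist x a := by
  have h := dist_triangle x a b
  unfold gp; linarith

lemma gp_comm (x a b : T) : gp x a b = gp x b a := by
  unfold gp; rw [dist_comm a b]; ring

lemma gp_le_right (x a b : T) : gp x a b ≤ dist x b := by
  rw [gp_comm]; exact gp_le_left x b a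

variable (H4 : ∀ x y z w : T, dist x y + dist z w ≤
    max (dist x z + dist y w) (dist x w + dist y z))

include H4

lemma um (x a b c : T) : min (gp x a b) (gp x b c) ≤ gp x a c := by
  have h := H4 a c b x
  have e1 := dist_comm a x
  have e2 := dist_comm b x
  have e3 := dist_comm c x
  have e4 := dist_comm c b
  rcases le_total (dist a b + dist c x) (dist a x + dist c b) with hm | hm
  · rw [max_eq_right hm] at h
    refine le_trans (min_le_right _ _) ?_
    unfold gp; linarith
  · rw [max_eq_left hm] at h
    refine le_trans (min_le_left _ _) ?_
    unfold gp; linarith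

lemma t2 {a b z w : T} (hz : dist a z + dist z b = dist a b)
    (hw : dist a w + dist w b = dist a b) (hle : dist a z ≤ dist a w) :
    dist z w = dist a w - dist a z := by
  have h := H4 z w a b
  have htri := dist_triangle a z w
  have hnn := dist_nonneg (x := z) (y := w)
  have e1 := dist_comm z a
  have e2 := dist_comm w a
  have e3 := dist_comm w b
  have e4 := dist_comm z b
  rcases le_total (dist z a + dist w b) (dist z b + dist w a) with hm | hm
  · rw [max_eq_right hm] at h; linarith
  · rw [max_eq_left hm] at h; linarith

lemma t1 {a b c z w : T} (hz : dist a z + dist z b = dist a b)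
    (hw : dist a w + dist w c = dist a c) (hd : dist a w = dist a z)
    (hδ : 2 * dist a z ≤ dist a b + dist a c - dist b c) : dist z w = 0 := by
  have step : dist z c = dist a c - dist a z := by
    have h := H4 z c a b
    have lower := dist_triangle a z c
    have e1 := dist_comm z a
    have e2 := dist_comm c a
    have e3 := dist_comm c b
    have e4 := dist_comm z b
    rcases le_total (dist z a + dist c b) (dist z b + dist c a) with hm | hm
    · rw [max_eq_right hm] at h; linarith
    · rw [max_eq_left hm] at h; linarith
  have h := H4 z w a c
  have hnn := dist_nonneg (x := z) (y := w)
  have e1 := dist_comm z a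
  have e2 := dist_comm w a
  have e3 := dist_comm w c
  have e4 := dist_comm z c
  rcases le_total (dist z a + dist w c) (dist z c + dist w a) with hm | hm
  · rw [max_eq_right hm] at h; linarith
  · rw [max_eq_left hm] at h; linarith

end Tree


section Orbit
variable {G : Type*} [Group G] {T : Type*} [MetricSpace T] {σ : T → G → T}

lemma key_dist (hσ : IsIsomRightAction σ) (p : T) (u : G) (m n : ℕ) :
    dist (σ p (u ^ m)) (σ p (u ^ (m + n))) = dist p (σ p (u ^ n)) := by
  rw [act_pair hσ]
  congr 2
  rw [add_comm m n, pow_add, mul_inv_cancel_right]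

lemma consec_dist (hσ : IsIsomRightAction σ) (p : T) (u : G) (n : ℕ) :
    dist (σ p (u ^ n)) (σ p (u ^ (n + 1))) = dist p (σ p u) := by
  have h := key_dist hσ p u n 1
  rwa [pow_one] at h

lemma sq_dist (hσ : IsIsomRightAction σ) (p : T) (u : G) :
    dist p (σ p (u ^ 2)) = dist (σ p u⁻¹) (σ p u) := by
  have h := act_pair hσ p u⁻¹ u
  rw [inv_inv, ← pow_two] at h
  exact h.symm

lemma pow_dist_le (hσ : IsIsomRightAction σ) (p : T) (u : G) :
    ∀ n : ℕ, dist p (σ p (u ^ n)) ≤ n * dist p (σ p u) := by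
  intro n
  induction n with
  | zero => simp [hσ.1]
  | succ n ih =>
    have h := dist_triangle p (σ p (u ^ n)) (σ p (u ^ (n + 1)))
    have h2 := consec_dist hσ p u n
    push_cast
    push_cast at ih
    linarith

lemma orbit_exact (hσ : IsIsomRightAction σ)
    (H4 : ∀ x y z w : T, dist x y + dist z w ≤
      max (dist x z + dist y w) (dist x w + dist y z))
    {p : T} {u : G}
    (hc : dist (σ p u⁻¹) (σ p u) = 2 * dist p (σ p u)) :
    ∀ n : ℕ, dist p (σ p (u ^ n)) = n * dist p (σ p u) := by
  set t := dist p (σ p u) with ht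
  rcases eq_or_lt_of_le (dist_nonneg (x := p) (y := σ p u)) with h0 | hpos
  · -- t = 0
    have hfix : σ p u = p := by
      rw [← dist_eq_zero]; rw [dist_comm]; exact h0.symm ▸ rfl
    intro n
    have : σ p (u ^ n) = p := by
      induction n with
      | zero => simp [hσ.1]
      | succ n ih =>
        rw [pow_succ, hσ.2.1, ih, hfix]
    have ht0 : t = 0 := by rw [ht, ← h0]
    rw [this, dist_self, ht0, mul_zero]
  · -- t > 0
    have d2 : dist p (σ p (u ^ 2)) = 2 * t := by rw [sq_dist hσ, hc]
    have main : ∀ n : ℕ, dist p (σ p (u ^ n)) = n * t ∧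
        dist p (σ p (u ^ (n + 1))) = (n + 1) * t := by
      intro n
      induction n with
      | zero => constructor
                · simp [hσ.1]
                · rw [pow_one]; push_cast; ring
      | succ n ih =>
        obtain ⟨ih0, ih1⟩ := ih
        refine ⟨by push_cast; push_cast at ih1; linarith, ?_⟩
        have k1 : dist (σ p (u ^ n)) (σ p (u ^ (n + 2))) = 2 * t := by
          have h := key_dist hσ p u n 2
          rw [h, d2]
        have k2 : dist (σ p (u ^ n)) (σ p (u ^ (n + 1))) = t := consec_dist hσ p u n
        have k3 : dist (σ p (u ^ (n + 1))) (σ p (u ^ (n + 2))) = t := consec_dist hσ p u (n + 1)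
        have goal : dist p (σ p (u ^ (n + 2))) = (n : ℝ) * t + 2 * t := by
          have hub : dist p (σ p (u ^ (n + 2))) ≤ (n : ℝ) * t + 2 * t := by
            have h := H4 p (σ p (u ^ (n + 2))) (σ p (u ^ n)) (σ p (u ^ (n + 1)))
            have e1 := dist_comm (σ p (u ^ (n + 2))) (σ p (u ^ (n + 1)))
            have e2 := dist_comm (σ p (u ^ (n + 2))) (σ p (u ^ n))
            push_cast at ih1
            rcases le_total (dist p (σ p (u ^ n)) + dist (σ p (u ^ (n + 2))) (σ p (u ^ (n + 1))))
              (dist p (σ p (u ^ (n + 1))) + dist (σ p (u ^ (n + 2))) (σ p (u ^ n))) with hm | hm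
            · rw [max_eq_right hm] at h; linarith
            · rw [max_eq_left hm] at h; linarith
          have hlb : (n : ℝ) * t + 2 * t ≤ dist p (σ p (u ^ (n + 2))) := by
            have h := H4 (σ p (u ^ n)) (σ p (u ^ (n + 2))) p (σ p (u ^ (n + 1)))
            have e1 := dist_comm (σ p (u ^ n)) p
            have e2 := dist_comm (σ p (u ^ (n + 2))) (σ p (u ^ (n + 1)))
            have e3 := dist_comm (σ p (u ^ (n + 2))) p
            push_cast at ih0 ih1
            rcases le_total (dist (σ p (u ^ n)) p + dist (σ p (u ^ (n + 2))) (σ p (u ^ (n + 1))))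
              (dist (σ p (u ^ n)) (σ p (u ^ (n + 1))) + dist (σ p (u ^ (n + 2))) p) with hm | hm
            · rw [max_eq_right hm] at h; linarith
            · rw [max_eq_left hm] at h; linarith
          linarith
        rw [goal]; push_cast; ring
    intro n
    exact (main n).1

lemma transLen_lower (hσ : IsIsomRightAction σ)
    (H4 : ∀ x y z w : T, dist x y + dist z w ≤
      max (dist x z + dist y w) (dist x w + dist y z))
    {p : T} {u : G}
    (hlt : dist p (σ p u) < dist (σ p u⁻¹) (σ p u)) :
    dist (σ p u⁻¹) (σ p u) - dist p (σ p u) ≤ transLen σ u := by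
  haveI : Nonempty T := ⟨p⟩
  set t := dist p (σ p u) with ht
  set c := dist (σ p u⁻¹) (σ p u) with hcdef
  have d2 : dist p (σ p (u ^ 2)) = c := sq_dist hσ p u
  have u1 : dist p (σ p (u ^ 1)) = t := by rw [pow_one]
  have step : ∀ n : ℕ, 1 ≤ n →
      dist p (σ p (u ^ n)) + (c - t) ≤ dist p (σ p (u ^ (n + 1))) := by
    intro n hn
    induction n with
    | zero => omega
    | succ n ih =>
      rcases Nat.eq_or_lt_of_le hn with h1 | h1
      · -- n + 1 = 1, i.e. n = 0
        have : n = 0 := by omega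
        subst this
        rw [u1]
        rw [(by norm_num : (0:ℕ) + 1 + 1 = 2), d2]
        linarith
      · have hn' : 1 ≤ n := by omega
        have ihh := ih hn'
        have k1 : dist (σ p (u ^ n)) (σ p (u ^ (n + 2))) = c := by
          have h := key_dist hσ p u n 2
          rw [h, d2]
        have k2 : dist (σ p (u ^ n)) (σ p (u ^ (n + 1))) = t := consec_dist hσ p u n
        have k3 : dist (σ p (u ^ (n + 1))) (σ p (u ^ (n + 2))) = t := consec_dist hσ p u (n + 1)
        have h := H4 (σ p (u ^ n)) (σ p (u ^ (n + 2))) p (σ p (u ^ (n + 1)))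
        have e1 := dist_comm (σ p (u ^ n)) p
        have e2 := dist_comm (σ p (u ^ (n + 2))) (σ p (u ^ (n + 1)))
        have e3 := dist_comm (σ p (u ^ (n + 2))) p
        rcases le_total (dist (σ p (u ^ n)) p + dist (σ p (u ^ (n + 2))) (σ p (u ^ (n + 1))))
          (dist (σ p (u ^ n)) (σ p (u ^ (n + 1))) + dist (σ p (u ^ (n + 2))) p) with hm | hm
        · rw [max_eq_right hm] at h; linarith
        · rw [max_eq_left hm] at h; linarith
  have growth : ∀ n : ℕ, t + n * (c - t) ≤ dist p (σ p (u ^ (n + 1))) := by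
    intro n
    induction n with
    | zero => simp [u1]; exact ht.le
    | succ n ih =>
      have hs := step (n + 1) (by omega)
      push_cast
      push_cast at ih
      linarith
  refine le_transLen fun q => ?_
  by_contra hq
  push_neg at hq
  set dq := dist q (σ q u) with hdq
  have hμ : 0 < (c - t) - dq := by linarith
  obtain ⟨n, hn⟩ := exists_nat_gt ((2 * dist p q + dq - t) / ((c - t) - dq))
  have hbig : (2 * dist p q + dq - t) < n * ((c - t) - dq) := by
    rw [div_lt_iff₀ hμ] at hn
    linarith
  have chain : dist p (σ p (u ^ (n + 1))) ≤ 2 * dist p q + (n + 1) * dq := by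
    have h1 := dist_triangle4 p q (σ q (u ^ (n + 1))) (σ p (u ^ (n + 1)))
    have h3 : dist (σ q (u ^ (n + 1))) (σ p (u ^ (n + 1))) = dist q p := act_isom hσ _ q p
    have h4 := pow_dist_le hσ q u (n + 1)
    have e := dist_comm q p
    push_cast
    push_cast at h4
    linarith
  have hg := growth n
  push_cast at chain hg
  linarith
end Orbit

section Crit
variable {G : Type*} [Group G] {T : Type*} [MetricSpace T] {σ : T → G → T}

lemma transLen_eq_of (hσ : IsIsomRightAction σ)
    (H4 : ∀ x y z w : T, dist x y + dist z w ≤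
      max (dist x z + dist y w) (dist x w + dist y z))
    {p : T} {u : G}
    (hc : dist (σ p u⁻¹) (σ p u) = 2 * dist p (σ p u))
    (ht : 0 < dist p (σ p u)) : transLen σ u = dist p (σ p u) := by
  have h1 := transLen_le (σ := σ) p u
  have h2 := transLen_lower hσ H4 (p := p) (u := u) (by rw [hc]; linarith)
  rw [hc] at h2
  linarith

lemma charSet_two_sided (hσ : IsIsomRightAction σ)
    (H4 : ∀ x y z w : T, dist x y + dist z w ≤
      max (dist x z + dist y w) (dist x w + dist y z))
    (Hgeo : ∀ x y : T, ∀ r : ℝ, 0 ≤ r → r ≤ dist x y →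
      ∃ z : T, dist x z = r ∧ dist z y = dist x y - r)
    {g : G} (hg : 0 < transLen σ g) {p : T} (hp : p ∈ charSet σ g) :
    dist (σ p g⁻¹) (σ p g) = 2 * transLen σ g := by
  set L := transLen σ g with hL
  have hpL : dist p (σ p g) = L := hp
  have hub : dist (σ p g⁻¹) (σ p g) ≤ 2 * L := by
    have h := dist_triangle (σ p g⁻¹) p (σ p g)
    have h2 : dist p (σ p g⁻¹) = L := by rw [act_dist_inv hσ, hpL]
    have e := dist_comm (σ p g⁻¹) p
    linarith
  by_contra hne
  have hlt : dist (σ p g⁻¹) (σ p g) < 2 * L := lt_of_le_of_ne hub hne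
  set ε := (2 * L - dist (σ p g⁻¹) (σ p g)) / 2 with hε
  have hεpos : 0 < ε := by
    have := dist_nonneg (x := σ p g⁻¹) (y := σ p g)
    unfold ε; linarith
  set δ := min ε (L / 2) with hδ
  have hδpos : 0 < δ := lt_min hεpos (by linarith)
  have hδL2 : δ ≤ L / 2 := min_le_right _ _
  have hδε : δ ≤ ε := min_le_left _ _
  obtain ⟨m₃, hm₃1, hm₃2⟩ := Hgeo p (σ p g) δ (le_of_lt hδpos) (by rw [hpL]; linarith)
  obtain ⟨m₁, hm₁1, hm₁2⟩ := Hgeo p (σ p g) (L - δ) (by linarith) (by rw [hpL]; linarith)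
  have hq2 : dist p (σ p (g * g)) = dist (σ p g⁻¹) (σ p g) := by
    have h := act_pair hσ p g⁻¹ g
    rw [inv_inv] at h
    exact h.symm
  have hgg : σ p (g * g) = σ (σ p g) g := hσ.2.1 p g g
  -- apply t1 with a := σ p g, b := p, c := σ p (g * g), z := m₁, w := σ m₃ g
  have hz : dist (σ p g) m₁ + dist m₁ p = dist (σ p g) p := by
    rw [dist_comm (σ p g) m₁, dist_comm m₁ p, dist_comm (σ p g) p]
    rw [hm₁1, hm₁2, hpL]; ring
  have hw : dist (σ p g) (σ m₃ g) + dist (σ m₃ g) (σ p (g * g)) = dist (σ p g) (σ p (g * g)) := by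
    have w1 : dist (σ p g) (σ m₃ g) = δ := by rw [act_isom hσ, hm₃1]
    have w2 : dist (σ m₃ g) (σ p (g * g)) = L - δ := by
      rw [hgg, act_isom hσ, hm₃2, hpL]
    have w3 : dist (σ p g) (σ p (g * g)) = L := by
      rw [act_pair hσ, mul_inv_cancel_right, hpL]
    rw [w1, w2, w3]; ring
  have hd : dist (σ p g) (σ m₃ g) = dist (σ p g) m₁ := by
    have w1 : dist (σ p g) (σ m₃ g) = δ := by rw [act_isom hσ, hm₃1]
    have w2 : dist (σ p g) m₁ = δ := by
      rw [dist_comm, hm₁2, hpL]; ring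
    rw [w1, w2]
  have hδ' : 2 * dist (σ p g) m₁ ≤ dist (σ p g) p + dist (σ p g) (σ p (g * g)) - dist p (σ p (g * g)) := by
    have w2 : dist (σ p g) m₁ = δ := by rw [dist_comm, hm₁2, hpL]; ring
    have w3 : dist (σ p g) (σ p (g * g)) = L := by
      rw [act_pair hσ, mul_inv_cancel_right, hpL]
    have w4 : dist (σ p g) p = L := by rw [dist_comm, hpL]
    rw [w2, w3, w4, hq2]
    unfold ε at hδε
    linarith
  have heq := t1 H4 hz hw hd hδ'
  have hm1w : m₁ = σ m₃ g := by rw [← dist_eq_zero]; exact heq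
  have ht2 : dist m₃ m₁ = (L - δ) - δ := by
    have b1 : dist p m₃ + dist m₃ (σ p g) = dist p (σ p g) := by rw [hm₃1, hm₃2]; ring
    have b2 : dist p m₁ + dist m₁ (σ p g) = dist p (σ p g) := by rw [hm₁1, hm₁2]; ring
    have hle : dist p m₃ ≤ dist p m₁ := by rw [hm₃1, hm₁1]; linarith
    have := t2 H4 b1 b2 hle
    rw [hm₃1, hm₁1] at this
    exact this
  have hfin : dist m₃ (σ m₃ g) = L - 2 * δ := by rw [← hm1w, ht2]; ring
  have := transLen_le (σ := σ) m₃ g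
  rw [hfin, ← hL] at this
  linarith

lemma line_dist (hσ : IsIsomRightAction σ)
    (H4 : ∀ x y z w : T, dist x y + dist z w ≤
      max (dist x z + dist y w) (dist x w + dist y z))
    (Hgeo : ∀ x y : T, ∀ r : ℝ, 0 ≤ r → r ≤ dist x y →
      ∃ z : T, dist x z = r ∧ dist z y = dist x y - r)
    {g : G} (hg : 0 < transLen σ g) {p : T} (hp : p ∈ charSet σ g) (n : ℕ) :
    dist p (σ p (g ^ n)) = n * transLen σ g := by
  have hc : dist (σ p g⁻¹) (σ p g) = 2 * dist p (σ p g) := by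
    rw [charSet_two_sided hσ H4 Hgeo hg hp, hp]
  have := orbit_exact hσ H4 hc n
  rw [this, hp]

lemma line_dist2 (hσ : IsIsomRightAction σ)
    (H4 : ∀ x y z w : T, dist x y + dist z w ≤
      max (dist x z + dist y w) (dist x w + dist y z))
    (Hgeo : ∀ x y : T, ∀ r : ℝ, 0 ≤ r → r ≤ dist x y →
      ∃ z : T, dist x z = r ∧ dist z y = dist x y - r)
    {g : G} (hg : 0 < transLen σ g) {p : T} (hp : p ∈ charSet σ g) (n : ℕ) :
    dist (σ p ((g ^ n)⁻¹)) (σ p (g ^ n)) = 2 * (n * transLen σ g) := by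
  have h := act_pair hσ p (g ^ n)⁻¹ (g ^ n)
  rw [inv_inv, ← pow_add] at h
  rw [h, line_dist hσ H4 Hgeo hg hp (n + n)]
  push_cast; ring

lemma line_dist_inv (hσ : IsIsomRightAction σ)
    (H4 : ∀ x y z w : T, dist x y + dist z w ≤
      max (dist x z + dist y w) (dist x w + dist y z))
    (Hgeo : ∀ x y : T, ∀ r : ℝ, 0 ≤ r → r ≤ dist x y →
      ∃ z : T, dist x z = r ∧ dist z y = dist x y - r)
    {g : G} (hg : 0 < transLen σ g) {p : T} (hp : p ∈ charSet σ g) (n : ℕ) :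
    dist p (σ p ((g ^ n)⁻¹)) = n * transLen σ g := by
  rw [act_dist_inv hσ]
  exact line_dist hσ H4 Hgeo hg hp n

lemma transLen_pow (hσ : IsIsomRightAction σ)
    (H4 : ∀ x y z w : T, dist x y + dist z w ≤
      max (dist x z + dist y w) (dist x w + dist y z))
    (Hgeo : ∀ x y : T, ∀ r : ℝ, 0 ≤ r → r ≤ dist x y →
      ∃ z : T, dist x z = r ∧ dist z y = dist x y - r)
    {g : G} (hg : 0 < transLen σ g) {p : T} (hp : p ∈ charSet σ g)
    {a : ℕ} (ha : 1 ≤ a) : transLen σ (g ^ a) = a * transLen σ g := by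
  have h1 : dist p (σ p (g ^ a)) = a * transLen σ g := line_dist hσ H4 Hgeo hg hp a
  have h2 : dist (σ p ((g ^ a)⁻¹)) (σ p (g ^ a)) = 2 * dist p (σ p (g ^ a)) := by
    rw [h1, line_dist2 hσ H4 Hgeo hg hp a]
  have hpos : 0 < dist p (σ p (g ^ a)) := by
    rw [h1]
    have : (1 : ℝ) ≤ (a : ℝ) := by exact_mod_cast ha
    nlinarith
  rw [transLen_eq_of hσ H4 h2 hpos, h1]

lemma charSet_inv (hσ : IsIsomRightAction σ) (g : G) :
    charSet σ g⁻¹ = charSet σ g := by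
  ext p
  unfold charSet
  simp only [Set.mem_setOf_eq]
  rw [act_dist_inv hσ, transLen_inv hσ]

end Crit

section Coord
variable {G : Type*} [Group G] {T : Type*} [MetricSpace T] {σ : T → G → T}

/-- Dichotomy: a point of `C_g` lies on the axis through `x`, on one side or the other. -/
lemma dich (hσ : IsIsomRightAction σ)
    (H4 : ∀ x y z w : T, dist x y + dist z w ≤
      max (dist x z + dist y w) (dist x w + dist y z))
    (Hgeo : ∀ x y : T, ∀ r : ℝ, 0 ≤ r → r ≤ dist x y →
      ∃ z : T, dist x z = r ∧ dist z y = dist x y - r)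
    {g : G} (hg : 0 < transLen σ g) {x z : T}
    (hx : x ∈ charSet σ g) (hz : z ∈ charSet σ g)
    {n : ℕ} (hn : dist x z ≤ n * transLen σ g) :
    (dist z (σ x (g ^ n)) = n * transLen σ g - dist x z ∧
     dist z (σ x ((g ^ n)⁻¹)) = n * transLen σ g + dist x z) ∨
    (dist z (σ x (g ^ n)) = n * transLen σ g + dist x z ∧
     dist z (σ x ((g ^ n)⁻¹)) = n * transLen σ g - dist x z) := by
  have ht0 : (0:ℝ) ≤ dist x z := dist_nonneg
  set Xp := σ x (g ^ n) with hXp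
  set Xm := σ x ((g ^ n)⁻¹) with hXm
  set Zp := σ z (g ^ n) with hZp
  set Zm := σ z ((g ^ n)⁻¹) with hZm
  have dxXp : dist x Xp = n * transLen σ g := line_dist hσ H4 Hgeo hg hx n
  have dxXm : dist x Xm = n * transLen σ g := line_dist_inv hσ H4 Hgeo hg hx n
  have dXX : dist Xm Xp = 2 * (n * transLen σ g) := line_dist2 hσ H4 Hgeo hg hx n
  have dzZp : dist z Zp = n * transLen σ g := line_dist hσ H4 Hgeo hg hz n
  have dzZm : dist z Zm = n * transLen σ g := line_dist_inv hσ H4 Hgeo hg hz n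
  have dZZ : dist Zm Zp = 2 * (n * transLen σ g) := line_dist2 hσ H4 Hgeo hg hz n
  have dcp : dist Xp Zp = dist x z := by rw [hXp, hZp, act_isom hσ]
  have dcm : dist Xm Zm = dist x z := by rw [hXm, hZm, act_isom hσ]
  have hum := um H4 z Zp x Zm
  have hzz : gp z Zp Zm = 0 := by
    unfold gp; have e := dist_comm Zp Zm; linarith
  rw [hzz] at hum
  have g1 : 0 ≤ gp z Zp x := gp_nonneg z Zp x
  have g2 : 0 ≤ gp z x Zm := gp_nonneg z x Zm
  have exz := dist_comm z x
  rcases le_total (gp z Zp x) (gp z x Zm) with hm | hm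
  · -- z is forward of x
    have h0 : gp z Zp x = 0 := le_antisymm (by rw [min_eq_left hm] at hum; exact hum) g1
    have dxZp : dist x Zp = dist x z + n * transLen σ g := by
      unfold gp at h0
      have e2 := dist_comm Zp x
      linarith
    left
    have key : gp x z Xp = dist x z := by
      have hum2 := um H4 x z Zp Xp
      have e1 : gp x z Zp = dist x z := by
        unfold gp; linarith
      have e2 : gp x Zp Xp = n * transLen σ g := by
        unfold gp; have e3 := dist_comm Zp Xp; linarith
      rw [e1, e2] at hum2
      have hle : gp x z Xp ≤ dist x z := gp_le_left x z Xp
      have hge : dist x z ≤ gp x z Xp := le_trans (le_min le_rfl hn) hum2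
      linarith
    have e3 : dist z Xp = n * transLen σ g - dist x z := by
      unfold gp at key; linarith
    refine ⟨e3, ?_⟩
    have lb := dist_triangle Xm z Xp
    have ub := dist_triangle z x Xm
    have e4 := dist_comm Xm z
    linarith
  · -- z is backward of x
    have h0 : gp z x Zm = 0 := le_antisymm (by rw [min_eq_right hm] at hum; exact hum) g2
    have dxZm : dist x Zm = dist x z + n * transLen σ g := by
      unfold gp at h0; linarith
    right
    have key : gp x z Xm = dist x z := by
      have hum2 := um H4 x z Zm Xm
      have e1 : gp x z Zm = dist x z := by
        unfold gp; linarith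
      have e2 : gp x Zm Xm = n * transLen σ g := by
        unfold gp; have e3 := dist_comm Zm Xm; linarith
      rw [e1, e2] at hum2
      have hle : gp x z Xm ≤ dist x z := gp_le_left x z Xm
      have hge : dist x z ≤ gp x z Xm := le_trans (le_min le_rfl hn) hum2
      linarith
    have e3 : dist z Xm = n * transLen σ g - dist x z := by
      unfold gp at key; linarith
    have lb := dist_triangle Xm z Xp
    have ub := dist_triangle z x Xp
    have e4 := dist_comm Xm z
    exact ⟨by linarith, e3⟩

end Coord

section Coord2
variable {G : Type*} [Group G] {T : Type*} [MetricSpace T] {σ : T → G → T}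

lemma shift_dist (hσ : IsIsomRightAction σ) (x : T) (g : G) {n m : ℕ} (hnm : n ≤ m) :
    dist (σ x (g ^ n)) (σ x (g ^ m)) = dist x (σ x (g ^ (m - n))) := by
  have h : g ^ m = g ^ (m - n) * g ^ n := by rw [← pow_add, Nat.sub_add_cancel hnm]
  rw [act_pair hσ, h, mul_inv_cancel_right]

lemma shift_dist_inv (hσ : IsIsomRightAction σ) (x : T) (g : G) {n m : ℕ} (hnm : n ≤ m) :
    dist (σ x ((g ^ n)⁻¹)) (σ x ((g ^ m)⁻¹)) = dist x (σ x ((g ^ (m - n))⁻¹)) := by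
  have h' : g ^ m = g ^ n * g ^ (m - n) := by rw [← pow_add, Nat.add_sub_cancel' hnm]
  have h2 : (g ^ m)⁻¹ * ((g ^ n)⁻¹)⁻¹ = (g ^ (m - n))⁻¹ := by
    rw [inv_inv, h', mul_inv_rev, mul_assoc, inv_mul_cancel, mul_one]
  rw [act_pair hσ, h2]

lemma dich_unique (hσ : IsIsomRightAction σ)
    (H4 : ∀ x y z w : T, dist x y + dist z w ≤
      max (dist x z + dist y w) (dist x w + dist y z))
    (Hgeo : ∀ x y : T, ∀ r : ℝ, 0 ≤ r → r ≤ dist x y →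
      ∃ z : T, dist x z = r ∧ dist z y = dist x y - r)
    {g : G} (hg : 0 < transLen σ g) {x z : T} (hx : x ∈ charSet σ g)
    {n m : ℕ} (hnm : n ≤ m) {s s' : ℝ}
    (h1 : dist z (σ x (g ^ n)) = n * transLen σ g - s)
    (h2 : dist z (σ x ((g ^ n)⁻¹)) = n * transLen σ g + s)
    (h3 : dist z (σ x (g ^ m)) = m * transLen σ g - s')
    (h4 : dist z (σ x ((g ^ m)⁻¹)) = m * transLen σ g + s') : s = s' := by
  have hf : dist (σ x (g ^ n)) (σ x (g ^ m)) = (m - n : ℕ) * transLen σ g := by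
    rw [shift_dist hσ x g hnm]; exact line_dist hσ H4 Hgeo hg hx (m - n)
  have hi : dist (σ x ((g ^ n)⁻¹)) (σ x ((g ^ m)⁻¹)) = (m - n : ℕ) * transLen σ g := by
    rw [shift_dist_inv hσ x g hnm]; exact line_dist_inv hσ H4 Hgeo hg hx (m - n)
  have hc : ((m - n : ℕ) : ℝ) = (m : ℝ) - (n : ℝ) := by
    push_cast [Nat.cast_sub hnm]; ring
  rw [hc] at hf hi
  have t1 := dist_triangle z (σ x (g ^ n)) (σ x (g ^ m))
  have t2 := dist_triangle z (σ x ((g ^ n)⁻¹)) (σ x ((g ^ m)⁻¹))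
  rw [h1, h3, hf] at t1
  rw [h2, h4, hi] at t2
  linarith

noncomputable def coord (σ : T → G → T) (g : G) (x z : T) : ℝ :=
  (dist z (σ x ((g ^ (Nat.ceil (dist x z / transLen σ g) + 1))⁻¹))
    - dist z (σ x (g ^ (Nat.ceil (dist x z / transLen σ g) + 1)))) / 2

lemma coord_spec (hσ : IsIsomRightAction σ)
    (H4 : ∀ x y z w : T, dist x y + dist z w ≤
      max (dist x z + dist y w) (dist x w + dist y z))
    (Hgeo : ∀ x y : T, ∀ r : ℝ, 0 ≤ r → r ≤ dist x y →
      ∃ z : T, dist x z = r ∧ dist z y = dist x y - r)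
    {g : G} (hg : 0 < transLen σ g) {x z : T}
    (hx : x ∈ charSet σ g) (hz : z ∈ charSet σ g)
    {n : ℕ} (hn : dist x z ≤ n * transLen σ g) :
    dist z (σ x (g ^ n)) = n * transLen σ g - coord σ g x z ∧
    dist z (σ x ((g ^ n)⁻¹)) = n * transLen σ g + coord σ g x z := by
  set N : ℕ := Nat.ceil (dist x z / transLen σ g) + 1 with hNdef
  have hNval : dist x z ≤ N * transLen σ g := by
    have h1 := Nat.le_ceil (dist x z / transLen σ g)
    have h2 : (Nat.ceil (dist x z / transLen σ g) : ℝ) ≤ (N : ℝ) := by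
      rw [hNdef]; push_cast; linarith
    have h3 : dist x z / transLen σ g ≤ (N : ℝ) := le_trans h1 h2
    calc dist x z = (dist x z / transLen σ g) * transLen σ g := by field_simp
    _ ≤ N * transLen σ g := mul_le_mul_of_nonneg_right h3 hg.le
  have hcoord : coord σ g x z
      = (dist z (σ x ((g ^ N)⁻¹)) - dist z (σ x (g ^ N))) / 2 := rfl
  have hatN : dist z (σ x (g ^ N)) = N * transLen σ g - coord σ g x z ∧
      dist z (σ x ((g ^ N)⁻¹)) = N * transLen σ g + coord σ g x z := by
    rcases dich hσ H4 Hgeo hg hx hz hNval with ⟨h1, h2⟩ | ⟨h1, h2⟩ <;>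
      rw [hcoord, h1, h2] <;> constructor <;> ring
  rcases dich hσ H4 Hgeo hg hx hz hn with ⟨h1, h2⟩ | ⟨h1, h2⟩
  · rcases le_total n N with ho | ho
    · have := dich_unique hσ H4 Hgeo hg hx ho h1 h2 hatN.1 hatN.2
      rw [h1, h2, this]; exact ⟨rfl, rfl⟩
    · have := dich_unique hσ H4 Hgeo hg hx ho hatN.1 hatN.2 h1 h2
      rw [h1, h2, ← this]; exact ⟨rfl, rfl⟩
  · rcases le_total n N with ho | ho
    · have := dich_unique hσ H4 Hgeo hg hx ho
        (s := -dist x z) (s' := coord σ g x z)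
        (by rw [h1]; ring) (by rw [h2]; ring) hatN.1 hatN.2
      constructor
      · rw [h1, ← this]; ring
      · rw [h2, ← this]; ring
    · have := dich_unique hσ H4 Hgeo hg hx ho
        (s := coord σ g x z) (s' := -dist x z)
        hatN.1 hatN.2 (by rw [h1]; ring) (by rw [h2]; ring)
      constructor
      · rw [h1, this]; ring
      · rw [h2, this]; ring

lemma coord_abs (hσ : IsIsomRightAction σ)
    (H4 : ∀ x y z w : T, dist x y + dist z w ≤
      max (dist x z + dist y w) (dist x w + dist y z))
    (Hgeo : ∀ x y : T, ∀ r : ℝ, 0 ≤ r → r ≤ dist x y →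
      ∃ z : T, dist x z = r ∧ dist z y = dist x y - r)
    {g : G} (hg : 0 < transLen σ g) {x z : T}
    (hx : x ∈ charSet σ g) (hz : z ∈ charSet σ g) :
    |coord σ g x z| = dist x z := by
  set N : ℕ := Nat.ceil (dist x z / transLen σ g) + 1 with hNdef
  have hNval : dist x z ≤ N * transLen σ g := by
    have h1 := Nat.le_ceil (dist x z / transLen σ g)
    have h2 : (Nat.ceil (dist x z / transLen σ g) : ℝ) ≤ (N : ℝ) := by
      rw [hNdef]; push_cast; linarith
    have h3 : dist x z / transLen σ g ≤ (N : ℝ) := le_trans h1 h2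
    calc dist x z = (dist x z / transLen σ g) * transLen σ g := by field_simp
    _ ≤ N * transLen σ g := mul_le_mul_of_nonneg_right h3 hg.le
  have hs := coord_spec hσ H4 Hgeo hg hx hz hNval
  rcases dich hσ H4 Hgeo hg hx hz hNval with ⟨h1, h2⟩ | ⟨h1, h2⟩
  · have : coord σ g x z = dist x z := by rw [h1] at hs; linarith [hs.1]
    rw [this]; exact abs_of_nonneg dist_nonneg
  · have : coord σ g x z = -dist x z := by rw [h1] at hs; linarith [hs.1]
    rw [this, abs_neg]; exact abs_of_nonneg dist_nonneg

lemma coord_base (hσ : IsIsomRightAction σ)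
    (H4 : ∀ x y z w : T, dist x y + dist z w ≤
      max (dist x z + dist y w) (dist x w + dist y z))
    (Hgeo : ∀ x y : T, ∀ r : ℝ, 0 ≤ r → r ≤ dist x y →
      ∃ z : T, dist x z = r ∧ dist z y = dist x y - r)
    {g : G} (hg : 0 < transLen σ g) {x : T} (hx : x ∈ charSet σ g) :
    coord σ g x x = 0 := by
  have h := coord_abs hσ H4 Hgeo hg hx hx
  rw [dist_self] at h
  exact abs_eq_zero.mp h

lemma coord_dist (hσ : IsIsomRightAction σ)
    (H4 : ∀ x y z w : T, dist x y + dist z w ≤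
      max (dist x z + dist y w) (dist x w + dist y z))
    (Hgeo : ∀ x y : T, ∀ r : ℝ, 0 ≤ r → r ≤ dist x y →
      ∃ z : T, dist x z = r ∧ dist z y = dist x y - r)
    {g : G} (hg : 0 < transLen σ g) {x z w : T}
    (hx : x ∈ charSet σ g) (hz : z ∈ charSet σ g) (hw : w ∈ charSet σ g) :
    dist z w = |coord σ g x z - coord σ g x w| := by
  set N : ℕ := Nat.ceil ((dist x z + dist x w) / transLen σ g) + 1 with hNdef
  have hsum : dist x z + dist x w ≤ N * transLen σ g := by
    have h1 := Nat.le_ceil ((dist x z + dist x w) / transLen σ g)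
    have h2 : (Nat.ceil ((dist x z + dist x w) / transLen σ g) : ℝ) ≤ (N : ℝ) := by
      rw [hNdef]; push_cast; linarith
    have h3 : (dist x z + dist x w) / transLen σ g ≤ (N : ℝ) := le_trans h1 h2
    calc dist x z + dist x w
        = ((dist x z + dist x w) / transLen σ g) * transLen σ g := by field_simp
    _ ≤ N * transLen σ g := mul_le_mul_of_nonneg_right h3 hg.le
  have hnz : dist x z ≤ N * transLen σ g := le_trans (by linarith [dist_nonneg (x := x) (y := w)]) hsum
  have hnw : dist x w ≤ N * transLen σ g := le_trans (by linarith [dist_nonneg (x := x) (y := z)]) hsum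
  obtain ⟨hz1, hz2⟩ := coord_spec hσ H4 Hgeo hg hx hz hnz
  obtain ⟨hw1, hw2⟩ := coord_spec hσ H4 Hgeo hg hx hw hnw
  have dXX : dist (σ x ((g ^ N)⁻¹)) (σ x (g ^ N)) = 2 * (N * transLen σ g) :=
    line_dist2 hσ H4 Hgeo hg hx N
  have bz : dist (σ x ((g ^ N)⁻¹)) z + dist z (σ x (g ^ N))
      = dist (σ x ((g ^ N)⁻¹)) (σ x (g ^ N)) := by
    rw [dist_comm (σ x ((g ^ N)⁻¹)) z, hz1, hz2, dXX]; ring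
  have bw : dist (σ x ((g ^ N)⁻¹)) w + dist w (σ x (g ^ N))
      = dist (σ x ((g ^ N)⁻¹)) (σ x (g ^ N)) := by
    rw [dist_comm (σ x ((g ^ N)⁻¹)) w, hw1, hw2, dXX]; ring
  rcases le_total (coord σ g x z) (coord σ g x w) with ho | ho
  · have hle : dist (σ x ((g ^ N)⁻¹)) z ≤ dist (σ x ((g ^ N)⁻¹)) w := by
      rw [dist_comm (σ x ((g ^ N)⁻¹)) z, dist_comm (σ x ((g ^ N)⁻¹)) w, hz2, hw2]; linarith
    have := t2 H4 bz bw hle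
    rw [dist_comm (σ x ((g ^ N)⁻¹)) z, dist_comm (σ x ((g ^ N)⁻¹)) w, hz2, hw2] at this
    rw [this, abs_of_nonpos (by linarith)]; ring
  · have hle : dist (σ x ((g ^ N)⁻¹)) w ≤ dist (σ x ((g ^ N)⁻¹)) z := by
      rw [dist_comm (σ x ((g ^ N)⁻¹)) z, dist_comm (σ x ((g ^ N)⁻¹)) w, hz2, hw2]; linarith
    have := t2 H4 bw bz hle
    rw [dist_comm (σ x ((g ^ N)⁻¹)) z, dist_comm (σ x ((g ^ N)⁻¹)) w, hz2, hw2] at this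
    rw [dist_comm z w, this, abs_of_nonneg (by linarith)]; ring

end Coord2

section Coord3
variable {G : Type*} [Group G] {T : Type*} [MetricSpace T] {σ : T → G → T}

lemma charSet_act (hσ : IsIsomRightAction σ) {g : G} {z : T} (hz : z ∈ charSet σ g) :
    σ z g ∈ charSet σ g := by
  have h : dist (σ z g) (σ (σ z g) g) = dist z (σ z g) := by
    rw [← hσ.2.1]
    have := act_pair hσ z g (g * g)
    rw [mul_inv_cancel_right] at this
    exact this
  show dist (σ z g) (σ (σ z g) g) = transLen σ g
  rw [h]; exact hz

lemma charSet_act_inv (hσ : IsIsomRightAction σ) {g : G} {z : T} (hz : z ∈ charSet σ g) :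
    σ z g⁻¹ ∈ charSet σ g := by
  have h1 : σ (σ z g⁻¹) g = z := by
    rw [← hσ.2.1, inv_mul_cancel, hσ.1]
  show dist (σ z g⁻¹) (σ (σ z g⁻¹) g) = transLen σ g
  rw [h1, dist_comm, act_dist_inv hσ]
  exact hz

lemma coord_act (hσ : IsIsomRightAction σ)
    (H4 : ∀ x y z w : T, dist x y + dist z w ≤
      max (dist x z + dist y w) (dist x w + dist y z))
    (Hgeo : ∀ x y : T, ∀ r : ℝ, 0 ≤ r → r ≤ dist x y →
      ∃ z : T, dist x z = r ∧ dist z y = dist x y - r)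
    {g : G} (hg : 0 < transLen σ g) {x z : T}
    (hx : x ∈ charSet σ g) (hz : z ∈ charSet σ g) :
    coord σ g x (σ z g) = coord σ g x z + transLen σ g := by
  have hz' : σ z g ∈ charSet σ g := charSet_act hσ hz
  set N : ℕ := Nat.ceil (dist x z / transLen σ g) + 1 with hNdef
  have hNval : dist x z ≤ N * transLen σ g := by
    have h1 := Nat.le_ceil (dist x z / transLen σ g)
    have h2 : (Nat.ceil (dist x z / transLen σ g) : ℝ) ≤ (N : ℝ) := by
      rw [hNdef]; push_cast; linarith
    have h3 : dist x z / transLen σ g ≤ (N : ℝ) := le_trans h1 h2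
    calc dist x z = (dist x z / transLen σ g) * transLen σ g := by field_simp
    _ ≤ N * transLen σ g := mul_le_mul_of_nonneg_right h3 hg.le
  have hNval2 : dist x (σ z g) ≤ ((N + 1 : ℕ) : ℝ) * transLen σ g := by
    have htri := dist_triangle x z (σ z g)
    have hL : dist z (σ z g) = transLen σ g := hz
    have hc : ((N + 1 : ℕ) : ℝ) = (N : ℝ) + 1 := by push_cast; ring
    rw [hc]; linarith
  have transfer : dist (σ z g) (σ x (g ^ (N + 1))) = dist z (σ x (g ^ N)) := by
    have hiso := act_isom hσ g⁻¹ (σ z g) (σ x (g ^ (N + 1)))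
    have e1 : σ (σ z g) g⁻¹ = z := by rw [← hσ.2.1, mul_inv_cancel, hσ.1]
    have e2 : σ (σ x (g ^ (N + 1))) g⁻¹ = σ x (g ^ N) := by
      rw [← hσ.2.1, pow_succ, mul_inv_cancel_right]
    rw [e1, e2] at hiso
    exact hiso.symm
  have s1 := (coord_spec hσ H4 Hgeo hg hx hz hNval).1
  have s2 := (coord_spec hσ H4 Hgeo hg hx hz' hNval2).1
  rw [transfer, s1] at s2
  push_cast at s2
  linarith

lemma coord_act_inv (hσ : IsIsomRightAction σ)
    (H4 : ∀ x y z w : T, dist x y + dist z w ≤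
      max (dist x z + dist y w) (dist x w + dist y z))
    (Hgeo : ∀ x y : T, ∀ r : ℝ, 0 ≤ r → r ≤ dist x y →
      ∃ z : T, dist x z = r ∧ dist z y = dist x y - r)
    {g : G} (hg : 0 < transLen σ g) {x z : T}
    (hx : x ∈ charSet σ g) (hz : z ∈ charSet σ g) :
    coord σ g x (σ z g⁻¹) = coord σ g x z - transLen σ g := by
  have hz' : σ z g⁻¹ ∈ charSet σ g := charSet_act_inv hσ hz
  have h := coord_act hσ H4 Hgeo hg hx hz'
  have e : σ (σ z g⁻¹) g = z := by rw [← hσ.2.1, inv_mul_cancel, hσ.1]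
  rw [e] at h
  linarith

lemma coord_act_pow (hσ : IsIsomRightAction σ)
    (H4 : ∀ x y z w : T, dist x y + dist z w ≤
      max (dist x z + dist y w) (dist x w + dist y z))
    (Hgeo : ∀ x y : T, ∀ r : ℝ, 0 ≤ r → r ≤ dist x y →
      ∃ z : T, dist x z = r ∧ dist z y = dist x y - r)
    {g : G} (hg : 0 < transLen σ g) {x z : T}
    (hx : x ∈ charSet σ g) (hz : z ∈ charSet σ g) (a : ℕ) :
    σ z (g ^ a) ∈ charSet σ g ∧
      coord σ g x (σ z (g ^ a)) = coord σ g x z + a * transLen σ g := by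
  induction a with
  | zero => constructor
            · have : σ z (g ^ 0) = z := by rw [pow_zero, hσ.1]
              rw [this]; exact hz
            · have : σ z (g ^ 0) = z := by rw [pow_zero, hσ.1]
              rw [this]; push_cast; ring
  | succ a ih =>
    obtain ⟨ihm, ihc⟩ := ih
    have e : σ z (g ^ (a + 1)) = σ (σ z (g ^ a)) g := by rw [← hσ.2.1, pow_succ]
    constructor
    · rw [e]; exact charSet_act hσ ihm
    · rw [e, coord_act hσ H4 Hgeo hg hx ihm, ihc]; push_cast; ring

lemma coord_act_pow_inv (hσ : IsIsomRightAction σ)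
    (H4 : ∀ x y z w : T, dist x y + dist z w ≤
      max (dist x z + dist y w) (dist x w + dist y z))
    (Hgeo : ∀ x y : T, ∀ r : ℝ, 0 ≤ r → r ≤ dist x y →
      ∃ z : T, dist x z = r ∧ dist z y = dist x y - r)
    {g : G} (hg : 0 < transLen σ g) {x z : T}
    (hx : x ∈ charSet σ g) (hz : z ∈ charSet σ g) (a : ℕ) :
    σ z ((g ^ a)⁻¹) ∈ charSet σ g ∧
      coord σ g x (σ z ((g ^ a)⁻¹)) = coord σ g x z - a * transLen σ g := by
  induction a with
  | zero => constructor
            · have : σ z ((g ^ 0)⁻¹) = z := by rw [pow_zero, inv_one, hσ.1]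
              rw [this]; exact hz
            · have : σ z ((g ^ 0)⁻¹) = z := by rw [pow_zero, inv_one, hσ.1]
              rw [this]; push_cast; ring
  | succ a ih =>
    obtain ⟨ihm, ihc⟩ := ih
    have e : σ z ((g ^ (a + 1))⁻¹) = σ (σ z ((g ^ a)⁻¹)) g⁻¹ := by
      rw [← hσ.2.1]
      congr 1
      rw [pow_succ', mul_inv_rev]
    constructor
    · rw [e]; exact charSet_act_inv hσ ihm
    · rw [e, coord_act_inv hσ H4 Hgeo hg hx ihm, ihc]; push_cast; ring

/-- Points between an axis point and its forward translate lie in the characteristic set. -/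
lemma ax_mem (hσ : IsIsomRightAction σ)
    (H4 : ∀ x y z w : T, dist x y + dist z w ≤
      max (dist x z + dist y w) (dist x w + dist y z))
    (Hgeo : ∀ x y : T, ∀ r : ℝ, 0 ≤ r → r ≤ dist x y →
      ∃ z : T, dist x z = r ∧ dist z y = dist x y - r)
    {g : G} (hg : 0 < transLen σ g) {z m : T} (hz : z ∈ charSet σ g)
    {n : ℕ} (hB : dist z m + dist m (σ z (g ^ n)) = dist z (σ z (g ^ n))) :
    m ∈ charSet σ g := by
  set L := transLen σ g with hLdef
  set e := dist z m with hedef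
  set E := σ z (g ^ n) with hE
  set E' := σ z (g ^ (n + 1)) with hE'
  set A := σ z g⁻¹ with hA
  have dzE : dist z E = n * L := line_dist hσ H4 Hgeo hg hz n
  have dmE : dist m E = n * L - e := by rw [dzE] at hB; linarith
  have dAz : dist A z = L := by
    rw [hA, dist_comm, act_dist_inv hσ]; exact hz
  have dAE : dist A E = (n + 1) * L := by
    have h := act_pair hσ z g⁻¹ (g ^ n)
    rw [inv_inv, ← pow_succ] at h
    rw [hA, hE, h, line_dist hσ H4 Hgeo hg hz (n + 1)]
    push_cast; ring
  have dEE' : dist E E' = L := by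
    rw [hE, hE', consec_dist hσ z g n]; exact hz
  have dAE' : dist A E' = (n + 2) * L := by
    have h := act_pair hσ z g⁻¹ (g ^ (n + 1))
    rw [inv_inv, ← pow_succ] at h
    rw [hA, hE', h, line_dist hσ H4 Hgeo hg hz (n + 2)]
    push_cast; ring
  have he0 : 0 ≤ e := dist_nonneg
  have dAm : dist A m = L + e := by
    have hub := dist_triangle A z m
    have hlb := dist_triangle A m E
    rw [dAz, ← hedef] at hub
    rw [dAE, dmE] at hlb
    linarith
  have dmE' : dist m E' = (n + 1) * L - e := by
    have hub := dist_triangle m E E'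
    have hlb := dist_triangle A m E'
    rw [dmE, dEE'] at hub
    rw [dAm, dAE'] at hlb
    linarith
  set W := σ m g with hW
  have hEg : σ E g = E' := by rw [hE, hE', ← hσ.2.1, ← pow_succ]
  have dWE' : dist W E' = n * L - e := by
    rw [hW, ← hEg, act_isom hσ, dmE]
  have dAW : dist A W = 2 * L + e := by
    have h1 := dist_triangle A (σ z g) W
    have h2 : dist A (σ z g) = 2 * L := by
      rw [hA]; exact charSet_two_sided hσ H4 Hgeo hg hz
    have h3 : dist (σ z g) W = e := by
      rw [hW, act_isom hσ]
    have hlb := dist_triangle A W E'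
    rw [dAE'] at hlb
    rw [dWE'] at hlb
    linarith
  have Bm : dist A m + dist m E' = dist A E' := by rw [dAm, dmE', dAE']; ring
  have BW : dist A W + dist W E' = dist A E' := by rw [dAW, dWE', dAE']; ring
  have hle : dist A m ≤ dist A W := by rw [dAm, dAW]; linarith
  have hmw := t2 H4 Bm BW hle
  rw [dAm, dAW] at hmw
  have hfin : dist m W = L := by linarith
  show dist m (σ m g) = transLen σ g
  rw [← hW]
  exact hfin
end Coord3

section Coh
variable {G : Type*} [Group G] {T : Type*} [MetricSpace T] {σ : T → G → T}

lemma coh (hσ : IsIsomRightAction σ)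
    (H4 : ∀ x y z w : T, dist x y + dist z w ≤
      max (dist x z + dist y w) (dist x w + dist y z))
    {p : T} {u v : G} (hu : 0 < transLen σ u) (hv : 0 < transLen σ v)
    (hpu : dist p (σ p u) = transLen σ u) (hpv : dist p (σ p v) = transLen σ v)
    (c1 : dist (σ p v⁻¹) (σ p u) = transLen σ u + transLen σ v)
    (c2 : dist (σ p u⁻¹) (σ p v) = transLen σ u + transLen σ v) :
    transLen σ (u * v) = transLen σ u + transLen σ v := by
  set L := transLen σ u with hL
  set M := transLen σ v with hM
  set Kp := σ p (u * v) with hKp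
  set Km := σ p ((u * v)⁻¹) with hKm
  have dpKp : dist p Kp = L + M := by
    have h := act_pair hσ p v⁻¹ u
    rw [inv_inv] at h
    rw [hKp, ← h, c1]
  have dpKm : dist p Km = L + M := by
    rw [hKm, act_dist_inv hσ, ← hKp, dpKp]
  have dvKp : dist (σ p v) Kp = L := by
    have h := act_pair hσ p v (u * v)
    rw [mul_inv_cancel_right] at h
    rw [hKp, h, hpu]
  have duKm : dist (σ p u⁻¹) Km = M := by
    have h := act_pair hσ p u⁻¹ ((u * v)⁻¹)
    have e : (u * v)⁻¹ * (u⁻¹)⁻¹ = v⁻¹ := by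
      rw [mul_inv_rev, inv_inv, mul_assoc, inv_mul_cancel, mul_one]
    rw [e] at h
    rw [hKm, h, act_dist_inv hσ, hpv]
  have dpu : dist p (σ p u⁻¹) = L := by rw [act_dist_inv hσ, hpu]
  have dpv : dist p (σ p v) = M := hpv
  -- gp p (σ p u⁻¹) (σ p v) = 0
  have gpuv : gp p (σ p u⁻¹) (σ p v) = 0 := by
    unfold gp; rw [dpu, dpv, c2]; ring
  have gKpv : gp p Kp (σ p v) = M := by
    unfold gp; rw [dpKp, dpv, dist_comm Kp (σ p v), dvKp]; ring
  have gKmu : gp p Km (σ p u⁻¹) = L := by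
    unfold gp; rw [dpKm, dpu, dist_comm Km (σ p u⁻¹), duKm]; ring
  have step1 : gp p (σ p u⁻¹) Kp ≤ 0 := by
    have h := um H4 p (σ p u⁻¹) Kp (σ p v)
    rw [gpuv, gKpv] at h
    rcases le_total (gp p (σ p u⁻¹) Kp) M with hm | hm
    · rw [min_eq_left hm] at h; exact h
    · rw [min_eq_right hm] at h; linarith
  have step2 : gp p Kp Km ≤ 0 := by
    have h := um H4 p Kp Km (σ p u⁻¹)
    rw [gKmu] at h
    have h2 : gp p Kp (σ p u⁻¹) ≤ 0 := by rw [gp_comm]; exact step1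
    rcases le_total (gp p Kp Km) L with hm | hm
    · rw [min_eq_left hm] at h; linarith
    · rw [min_eq_right hm] at h; linarith
  have dKK : dist Km Kp = 2 * dist p Kp := by
    have htri := dist_triangle Km p Kp
    have e1 := dist_comm Km p
    unfold gp at step2
    have e2 := dist_comm Kp Km
    rw [dpKp]
    linarith
  have hpos : 0 < dist p Kp := by rw [dpKp]; linarith
  have := transLen_eq_of hσ H4 (p := p) (u := u * v) (by rw [← hKm, ← hKp]; exact dKK) (by rw [← hKp]; exact hpos)
  rw [← hKp] at this
  rw [this, dpKp]
end Coh

section SameSign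
variable {G : Type*} [Group G] {T : Type*} [MetricSpace T] {σ : T → G → T}

lemma same_sign (hσ : IsIsomRightAction σ)
    (H4 : ∀ x y z w : T, dist x y + dist z w ≤
      max (dist x z + dist y w) (dist x w + dist y z))
    (Hgeo : ∀ x y : T, ∀ r : ℝ, 0 ≤ r → r ≤ dist x y →
      ∃ z : T, dist x z = r ∧ dist z y = dist x y - r)
    {g h : G} (hg : 0 < transLen σ g) (hh : 0 < transLen σ h)
    {x : T} (hxg : x ∈ charSet σ g) (hxh : x ∈ charSet σ h)
    (hor : transLen σ (g * h⁻¹) < transLen σ (g * h))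
    {z : T} (hzg : z ∈ charSet σ g) (hzh : z ∈ charSet σ h) :
    coord σ h x z = coord σ g x z := by
  set L := transLen σ g with hLdef
  set M := transLen σ h with hMdef
  by_contra hne
  have habsg : |coord σ g x z| = dist x z := coord_abs hσ H4 Hgeo hg hxg hzg
  have habsh : |coord σ h x z| = dist x z := coord_abs hσ H4 Hgeo hh hxh hzh
  have hzne : z ≠ x := by
    intro hzx
    subst hzx
    rw [coord_base hσ H4 Hgeo hg hxg, coord_base hσ H4 Hgeo hh hxh] at hne
    exact hne rfl
  have htpos : 0 < dist x z := dist_pos.mpr (fun hxz => hzne hxz.symm)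
  -- opposite signs
  have hopp : coord σ h x z = - coord σ g x z := by
    rcases abs_cases (coord σ g x z) with ⟨e1, _⟩ | ⟨e1, _⟩ <;>
      rcases abs_cases (coord σ h x z) with ⟨e2, _⟩ | ⟨e2, _⟩ <;>
      first
        | (exfalso; apply hne; rw [e1] at habsg; rw [e2] at habsh; linarith)
        | linarith
  -- coordinates of the four one-step translates
  have cbg : coord σ g x x = 0 := coord_base hσ H4 Hgeo hg hxg
  have cbh : coord σ h x x = 0 := coord_base hσ H4 Hgeo hh hxh
  have cg1 : coord σ g x (σ x g) = L := by
    rw [coord_act hσ H4 Hgeo hg hxg hxg, cbg]; ring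
  have cg2 : coord σ g x (σ x g⁻¹) = -L := by
    rw [coord_act_inv hσ H4 Hgeo hg hxg hxg, cbg]; ring
  have ch1 : coord σ h x (σ x h) = M := by
    rw [coord_act hσ H4 Hgeo hh hxh hxh, cbh]; ring
  have ch2 : coord σ h x (σ x h⁻¹) = -M := by
    rw [coord_act_inv hσ H4 Hgeo hh hxh hxh, cbh]; ring
  have hgmem : σ x g ∈ charSet σ g := charSet_act hσ hxg
  have hgmem' : σ x g⁻¹ ∈ charSet σ g := charSet_act_inv hσ hxg
  have hhmem : σ x h ∈ charSet σ h := charSet_act hσ hxh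
  have hhmem' : σ x h⁻¹ ∈ charSet σ h := charSet_act_inv hσ hxh
  -- distances from z to the translates
  have dg1 : dist (σ x g) z = |L - coord σ g x z| := by
    rw [dist_comm]
    rw [coord_dist hσ H4 Hgeo hg hxg hzg hgmem, cg1, abs_sub_comm]
  have dg2 : dist (σ x g⁻¹) z = |L + coord σ g x z| := by
    rw [dist_comm, coord_dist hσ H4 Hgeo hg hxg hzg hgmem', cg2]
    congr 1; ring
  have dh1 : dist (σ x h) z = |M - coord σ h x z| := by
    rw [dist_comm, coord_dist hσ H4 Hgeo hh hxh hzh hhmem, ch1, abs_sub_comm]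
  have dh2 : dist (σ x h⁻¹) z = |M + coord σ h x z| := by
    rw [dist_comm, coord_dist hσ H4 Hgeo hh hxh hzh hhmem', ch2]
    congr 1; ring
  have dxg : dist x (σ x g) = L := hxg
  have dxg' : dist x (σ x g⁻¹) = L := by rw [act_dist_inv hσ]; exact hxg
  have dxh : dist x (σ x h) = M := hxh
  have dxh' : dist x (σ x h⁻¹) = M := by rw [act_dist_inv hσ]; exact hxh
  -- the two key orthogonality facts
  have key1 : dist (σ x h) (σ x g) = L + M := by
    have htri := dist_triangle (σ x h) x (σ x g)
    have e0 := dist_comm (σ x h) x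
    rcases le_or_gt (coord σ g x z) 0 with hsign | hsign
    · -- c_g z = -t, c_h z = t : gp x (σ x g) z = 0, gp x (σ x h) z > 0
      have hcg : coord σ g x z = -dist x z := by
        rcases abs_cases (coord σ g x z) with ⟨e1, e2⟩ | ⟨e1, _⟩ <;> linarith
      have hch : coord σ h x z = dist x z := by rw [hopp, hcg]; ring
      have gpg : gp x (σ x g) z = 0 := by
        unfold gp
        rw [dxg, dg1, hcg, abs_of_nonneg (by linarith)]
        ring
      have gph : 0 < gp x (σ x h) z := by
        unfold gp
        rw [dxh, dh1, hch]
        rcases abs_cases (M - dist x z) with ⟨e1, _⟩ | ⟨e1, _⟩ <;> linarith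
      have hum := um H4 x (σ x g) (σ x h) z
      have hle : gp x (σ x g) (σ x h) ≤ 0 := by
        rcases le_total (gp x (σ x g) (σ x h)) (gp x (σ x h) z) with hm | hm
        · rw [min_eq_left hm] at hum; rw [gpg] at hum; exact hum
        · rw [min_eq_right hm] at hum; rw [gpg] at hum; linarith
      unfold gp at hle
      rw [dxg, dxh] at hle
      have e1 := dist_comm (σ x g) (σ x h)
      linarith
    · -- c_g z = t, c_h z = -t : gp x (σ x h) z = 0, gp x (σ x g) z > 0
      have hcg : coord σ g x z = dist x z := by
        rcases abs_cases (coord σ g x z) with ⟨e1, _⟩ | ⟨e1, _⟩ <;> linarith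
      have hch : coord σ h x z = -dist x z := by rw [hopp, hcg]
      have gph : gp x (σ x h) z = 0 := by
        unfold gp
        rw [dxh, dh1, hch, abs_of_nonneg (by linarith)]
        ring
      have gpg : 0 < gp x (σ x g) z := by
        unfold gp
        rw [dxg, dg1, hcg]
        rcases abs_cases (L - dist x z) with ⟨e1, _⟩ | ⟨e1, _⟩ <;> linarith
      have hum := um H4 x (σ x h) (σ x g) z
      have hle : gp x (σ x h) (σ x g) ≤ 0 := by
        rcases le_total (gp x (σ x h) (σ x g)) (gp x (σ x g) z) with hm | hm
        · rw [min_eq_left hm] at hum; rw [gph] at hum; exact hum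
        · rw [min_eq_right hm] at hum; rw [gph] at hum; linarith
      unfold gp at hle
      rw [dxg, dxh] at hle
      linarith
  have key2 : dist (σ x g⁻¹) (σ x h⁻¹) = L + M := by
    have htri := dist_triangle (σ x g⁻¹) x (σ x h⁻¹)
    have e0 := dist_comm (σ x g⁻¹) x
    rcases le_or_gt (coord σ g x z) 0 with hsign | hsign
    · -- c_g z = -t : gp x (σ x g⁻¹) z > 0, gp x (σ x h⁻¹) z = 0
      have hcg : coord σ g x z = -dist x z := by
        rcases abs_cases (coord σ g x z) with ⟨e1, e2⟩ | ⟨e1, _⟩ <;> linarith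
      have hch : coord σ h x z = dist x z := by rw [hopp, hcg]; ring
      have gph : gp x (σ x h⁻¹) z = 0 := by
        unfold gp
        rw [dxh', dh2, hch, abs_of_nonneg (by linarith)]
        ring
      have gpg : 0 < gp x (σ x g⁻¹) z := by
        unfold gp
        rw [dxg', dg2, hcg]
        rcases abs_cases (L + -dist x z) with ⟨e1, _⟩ | ⟨e1, _⟩ <;> linarith
      have hum := um H4 x (σ x h⁻¹) (σ x g⁻¹) z
      have hle : gp x (σ x h⁻¹) (σ x g⁻¹) ≤ 0 := by
        rcases le_total (gp x (σ x h⁻¹) (σ x g⁻¹)) (gp x (σ x g⁻¹) z) with hm | hm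
        · rw [min_eq_left hm] at hum; rw [gph] at hum; exact hum
        · rw [min_eq_right hm] at hum; rw [gph] at hum; linarith
      unfold gp at hle
      rw [dxg', dxh'] at hle
      have e1 := dist_comm (σ x g⁻¹) (σ x h⁻¹)
      linarith
    · -- c_g z = t : gp x (σ x g⁻¹) z = 0, gp x (σ x h⁻¹) z > 0
      have hcg : coord σ g x z = dist x z := by
        rcases abs_cases (coord σ g x z) with ⟨e1, _⟩ | ⟨e1, _⟩ <;> linarith
      have hch : coord σ h x z = -dist x z := by rw [hopp, hcg]
      have gpg : gp x (σ x g⁻¹) z = 0 := by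
        unfold gp
        rw [dxg', dg2, hcg, abs_of_nonneg (by linarith)]
        ring
      have gph : 0 < gp x (σ x h⁻¹) z := by
        unfold gp
        rw [dxh', dh2, hch]
        rcases abs_cases (M + -dist x z) with ⟨e1, _⟩ | ⟨e1, _⟩ <;> linarith
      have hum := um H4 x (σ x g⁻¹) (σ x h⁻¹) z
      have hle : gp x (σ x g⁻¹) (σ x h⁻¹) ≤ 0 := by
        rcases le_total (gp x (σ x g⁻¹) (σ x h⁻¹)) (gp x (σ x h⁻¹) z) with hm | hm
        · rw [min_eq_left hm] at hum; rw [gpg] at hum; exact hum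
        · rw [min_eq_right hm] at hum; rw [gpg] at hum; linarith
      unfold gp at hle
      rw [dxg', dxh'] at hle
      linarith
  -- apply coherence to (g, h⁻¹)
  have hcoh : transLen σ (g * h⁻¹) = L + M := by
    have hv : 0 < transLen σ h⁻¹ := by rw [transLen_inv hσ]; exact hh
    have hpv : dist x (σ x h⁻¹) = transLen σ h⁻¹ := by
      rw [transLen_inv hσ]; exact dxh'
    have c1' : dist (σ x (h⁻¹)⁻¹) (σ x g) = transLen σ g + transLen σ h⁻¹ := by
      rw [inv_inv, transLen_inv hσ]; exact key1
    have c2' : dist (σ x g⁻¹) (σ x h⁻¹) = transLen σ g + transLen σ h⁻¹ := by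
      rw [transLen_inv hσ]; exact key2
    have := coh hσ H4 hg hv hxg hpv c1' c2'
    rw [transLen_inv hσ] at this
    exact this
  have hub : transLen σ (g * h) ≤ L + M := by
    have h1 := transLen_le (σ := σ) x (g * h)
    have h2 := dist_triangle x (σ x h) (σ x (g * h))
    have h3 : dist (σ x h) (σ x (g * h)) = L := by
      have hp := act_pair hσ x h (g * h)
      rw [mul_inv_cancel_right] at hp
      rw [hp]; exact hxg
    rw [dxh, h3] at h2
    linarith
  rw [hcoh] at hor
  linarith
end SameSign



set_option maxHeartbeats 1600000 in
/-- if the axes of hyperbolic `g` and `h` intersect in a bounded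
set with at least two points, and the orientations agree (`ℓ(gh) > ℓ(gh⁻¹)`),
then `(g^a, h^b)` is a good pair for all sufficiently large `a, b`. -/
theorem exists_good_pair_powers {G : Type*} [Group G] {T : Type*} [MetricSpace T]
    (σ : T → G → T) (hT : IsRealTree T) (hσ : IsIsomRightAction σ) (g h : G)
    (hg : 0 < transLen σ g) (hh : 0 < transLen σ h)
    (hbdd : Bornology.IsBounded (charSet σ g ∩ charSet σ h))
    (htwo : ∃ x ∈ charSet σ g ∩ charSet σ h,
      ∃ y ∈ charSet σ g ∩ charSet σ h, x ≠ y)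
    (hor : transLen σ (g * h⁻¹) < transLen σ (g * h)) :
    ∃ A B : ℕ, 0 < A ∧ 0 < B ∧ ∀ a ≥ A, ∀ b ≥ B,
      GoodPair (transLen σ) (g ^ a) (h ^ b) := by
  obtain ⟨hTne, hTcomp, hTgeo, H4⟩ := hT
  have Hgeo : ∀ x y : T, ∀ r : ℝ, 0 ≤ r → r ≤ dist x y →
      ∃ z : T, dist x z = r ∧ dist z y = dist x y - r := by
    intro x y r h0 hr
    obtain ⟨f, hf0, hfd, hf⟩ := hTgeo x y
    refine ⟨f r, ?_, ?_⟩
    · have hq := hf 0 ⟨le_rfl, dist_nonneg⟩ r ⟨h0, hr⟩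
      rw [hf0] at hq
      rw [hq, abs_of_nonpos (by linarith), neg_sub, sub_zero]
    · have hq := hf r ⟨h0, hr⟩ (dist x y) ⟨dist_nonneg, le_rfl⟩
      rw [hfd] at hq
      rw [hq, abs_of_nonpos (by linarith), neg_sub]
  obtain ⟨x, hxS, y, hyS, hxy⟩ := htwo
  obtain ⟨hxg, hxh⟩ := hxS
  obtain ⟨hyg, hyh⟩ := hyS
  set L := transLen σ g with hLdef
  set M := transLen σ h with hMdef
  obtain ⟨C, hC⟩ := Metric.isBounded_iff.mp hbdd
  set D := max C 0 with hDdef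
  have hD0 : (0:ℝ) ≤ D := le_max_right C 0
  have hDb : ∀ z ∈ charSet σ g ∩ charSet σ h, ∀ w ∈ charSet σ g ∩ charSet σ h,
      dist z w ≤ D := fun z hz w hw => le_trans (hC hz hw) (le_max_left _ _)
  set s0 := dist x y with hs0def
  have hs0 : 0 < s0 := dist_pos.mpr hxy
  set ε := min 1 s0 / 2 with hεdef
  have hε0 : 0 < ε := by
    have := lt_min one_pos hs0
    rw [hεdef]; linarith
  have hε1 : ε ≤ 1 / 2 := by
    have := min_le_left 1 s0
    rw [hεdef]; linarith
  have hεs : ε ≤ s0 / 2 := by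
    have := min_le_right 1 s0
    rw [hεdef]; linarith
  set K := (fun z => coord σ g x z) '' (charSet σ g ∩ charSet σ h) with hKdef
  have hKne : K.Nonempty := ⟨coord σ g x x, ⟨x, ⟨hxg, hxh⟩, rfl⟩⟩
  have hKbdd : BddBelow K := by
    refine ⟨-D, fun v hv => ?_⟩
    obtain ⟨z, hzS, rfl⟩ := hv
    have h1 : |coord σ g x z| = dist x z := coord_abs hσ H4 Hgeo hg hxg hzS.1
    have h2 : dist x z ≤ D := hDb x ⟨hxg, hxh⟩ z hzS
    have := abs_le.mp (le_of_eq_of_le h1 h2)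
    linarith [this.1]
  set ι := sInf K with hιdef
  have hιle : ∀ z ∈ charSet σ g ∩ charSet σ h, ι ≤ coord σ g x z :=
    fun z hz => csInf_le hKbdd ⟨z, hz, rfl⟩
  obtain ⟨v, hvK, hvlt⟩ := exists_lt_of_csInf_lt hKne (lt_add_of_pos_right ι hε0)
  obtain ⟨P, hPS, rfl⟩ := hvK
  obtain ⟨hPg, hPh⟩ := hPS
  -- choose w among x, y with larger coordinate
  have hcx : coord σ g x x = 0 := coord_base hσ H4 Hgeo hg hxg
  have hcxy : dist x y = |coord σ g x x - coord σ g x y| :=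
    coord_dist hσ H4 Hgeo hg hxg hxg hyg
  obtain ⟨w, hwg, hwh, hwc⟩ :
      ∃ w, w ∈ charSet σ g ∧ w ∈ charSet σ h ∧ ι + s0 ≤ coord σ g x w := by
    rcases le_total (coord σ g x x) (coord σ g x y) with hc | hc
    · refine ⟨y, hyg, hyh, ?_⟩
      have h1 := hιle x ⟨hxg, hxh⟩
      rw [abs_of_nonpos (by linarith)] at hcxy
      rw [← hs0def] at hcxy
      linarith
    · refine ⟨x, hxg, hxh, ?_⟩
      have h1 := hιle y ⟨hyg, hyh⟩
      rw [abs_of_nonneg (by linarith)] at hcxy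
      rw [← hs0def] at hcxy
      linarith
  set r := coord σ g x w - coord σ g x P with hrdef
  have hrpos : s0 / 2 ≤ r := by rw [hrdef]; linarith
  have hdPw : dist P w = r := by
    have := coord_dist hσ H4 Hgeo hg hxg hPg hwg
    rw [this, abs_of_nonpos (by rw [hrdef] at *; linarith), hrdef]; ring
  have hrD : r ≤ D := by
    rw [← hdPw]; exact hDb P ⟨hPg, hPh⟩ w ⟨hwg, hwh⟩
  -- same sign on the intersection
  have hsw : coord σ h x w = coord σ g x w :=
    same_sign hσ H4 Hgeo hg hh hxg hxh hor hwg hwh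
  have hsP : coord σ h x P = coord σ g x P :=
    same_sign hσ H4 Hgeo hg hh hxg hxh hor hPg hPh
  -- choice of A B
  refine ⟨max 1 (Nat.ceil ((D + 1) / L)), max 1 (Nat.ceil ((D + 1) / M)),
    lt_of_lt_of_le one_pos (le_max_left _ _), lt_of_lt_of_le one_pos (le_max_left _ _),
    fun a ha b hb => ?_⟩
  have ha1 : 1 ≤ a := le_trans (le_max_left _ _) ha
  have hb1 : 1 ≤ b := le_trans (le_max_left _ _) hb
  have haL : D + 1 ≤ a * L := by
    have h1 : (D + 1) / L ≤ (Nat.ceil ((D + 1) / L) : ℝ) := Nat.le_ceil _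
    have h2 : (Nat.ceil ((D + 1) / L) : ℝ) ≤ (a : ℝ) :=
      Nat.cast_le.mpr (le_trans (le_max_right _ _) ha)
    calc D + 1 = ((D + 1) / L) * L := by field_simp
    _ ≤ (a : ℝ) * L := mul_le_mul_of_nonneg_right (by linarith) hg.le
  have hbM : D + 1 ≤ b * M := by
    have h1 : (D + 1) / M ≤ (Nat.ceil ((D + 1) / M) : ℝ) := Nat.le_ceil _
    have h2 : (Nat.ceil ((D + 1) / M) : ℝ) ≤ (b : ℝ) :=
      Nat.cast_le.mpr (le_trans (le_max_right _ _) hb)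
    calc D + 1 = ((D + 1) / M) * M := by field_simp
    _ ≤ (b : ℝ) * M := mul_le_mul_of_nonneg_right (by linarith) hh.le
  have haR : (1:ℝ) ≤ (a:ℝ) := by exact_mod_cast ha1
  have hbR : (1:ℝ) ≤ (b:ℝ) := by exact_mod_cast hb1
  have hPlt : coord σ g x P < ι + ε := hvlt
  -- the four translates of P
  set Ep := σ P (g ^ a) with hEpdef
  set Em := σ P ((g ^ a)⁻¹) with hEmdef
  set Fp := σ P (h ^ b) with hFpdef
  set Fm := σ P ((h ^ b)⁻¹) with hFmdef
  obtain ⟨hEpmem, hEpc⟩ := coord_act_pow hσ H4 Hgeo hg hxg hPg a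
  obtain ⟨hEmmem, hEmc⟩ := coord_act_pow_inv hσ H4 Hgeo hg hxg hPg a
  obtain ⟨hFpmem, hFpc⟩ := coord_act_pow hσ H4 Hgeo hh hxh hPh b
  obtain ⟨hFmmem, hFmc⟩ := coord_act_pow_inv hσ H4 Hgeo hh hxh hPh b
  have dPEp : dist P Ep = a * L := by
    have h1 := coord_dist hσ H4 Hgeo hg hxg hPg hEpmem
    rw [hEpc] at h1
    rw [hEpdef, h1, abs_of_nonpos (by nlinarith [haR, hg]), ← hLdef]
    ring
  have dPEm : dist P Em = a * L := by
    have h1 := coord_dist hσ H4 Hgeo hg hxg hPg hEmmem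
    rw [hEmc] at h1
    rw [hEmdef, h1, abs_of_nonneg (by nlinarith [haR, hg]), ← hLdef]
    ring
  have dPFp : dist P Fp = b * M := by
    have h1 := coord_dist hσ H4 Hgeo hh hxh hPh hFpmem
    rw [hFpc] at h1
    rw [hFpdef, h1, abs_of_nonpos (by nlinarith [hbR, hh]), ← hMdef]
    ring
  have dPFm : dist P Fm = b * M := by
    have h1 := coord_dist hσ H4 Hgeo hh hxh hPh hFmmem
    rw [hFmc] at h1
    rw [hFmdef, h1, abs_of_nonneg (by nlinarith [hbR, hh]), ← hMdef]
    ring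
  set Δ := gp P Ep Fp with hΔdef
  have dEpFp : dist Ep Fp = a * L + b * M - 2 * Δ := by
    have : Δ = (dist P Ep + dist P Fp - dist Ep Fp) / 2 := rfl
    rw [dPEp, dPFp] at this
    linarith
  -- Δ ≥ r
  have hwEp : dist w Ep = a * L - r := by
    have h1 := coord_dist hσ H4 Hgeo hg hxg hwg hEpmem
    rw [hEpc] at h1
    rw [hEpdef, h1, abs_of_nonpos (by rw [hrdef] at hrD; linarith), ← hLdef, hrdef]
    ring
  have hwFp : dist w Fp = b * M - r := by
    have h1 := coord_dist hσ H4 Hgeo hh hxh hwh hFpmem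
    rw [hFpc, hsw, hsP] at h1
    rw [hFpdef, h1, abs_of_nonpos (by rw [hrdef] at hrD; linarith), ← hMdef, hrdef]
    ring
  have hΔr : r ≤ Δ := by
    have hum := um H4 P Ep w Fp
    have g1 : gp P Ep w = r := by
      unfold gp
      rw [dPEp, hdPw, dist_comm Ep w, hwEp]; ring
    have g2 : gp P w Fp = r := by
      unfold gp
      rw [dPFp, hdPw, hwFp]; ring
    rw [g1, g2, min_self] at hum
    exact hum
  have hΔ0 : 0 < Δ := lt_of_lt_of_le (by linarith) hΔr
  -- Δ ≤ D
  have hΔD : Δ ≤ D := by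
    by_contra hgt
    push_neg at hgt
    set d0 := min Δ (min (a * L) (b * M)) with hd0def
    have hd00 : 0 ≤ d0 := le_min hΔ0.le (le_min (by linarith) (by linarith))
    have hd0a : d0 ≤ a * L := le_trans (min_le_right _ _) (min_le_left _ _)
    have hd0b : d0 ≤ b * M := le_trans (min_le_right _ _) (min_le_right _ _)
    have hd0Δ : d0 ≤ Δ := min_le_left _ _
    obtain ⟨m, hm1, hm2⟩ := Hgeo P Ep d0 hd00 (by rw [dPEp]; exact hd0a)
    obtain ⟨m', hm'1, hm'2⟩ := Hgeo P Fp d0 hd00 (by rw [dPFp]; exact hd0b)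
    have hmm0 : dist m m' = 0 := by
      refine t1 H4 (a := P) (b := Ep) (c := Fp) (z := m) (w := m')
        (by rw [hm1, hm2]; ring) (by rw [hm'1, hm'2]; ring)
        (by rw [hm1, hm'1]) ?_
      rw [hm1, dPEp, dPFp, dEpFp]
      linarith
    have hmm : m = m' := by rwa [dist_eq_zero] at hmm0
    have hmg : m ∈ charSet σ g :=
      ax_mem hσ H4 Hgeo hg hPg (n := a) (by rw [← hEpdef, hm1, hm2]; ring)
    have hmh : m ∈ charSet σ h := by
      refine ax_mem hσ H4 Hgeo hh hPh (n := b) ?_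
      rw [← hFpdef, hmm, hm'1, hm'2]; ring
    have hle := hDb P ⟨hPg, hPh⟩ m ⟨hmg, hmh⟩
    rw [hm1] at hle
    have : D < d0 := lt_min hgt (lt_min (by linarith) (by linarith))
    linarith
  -- the backward overlap is at most ε
  set e := gp P Em Fm with hedef
  have he0 : 0 ≤ e := gp_nonneg P Em Fm
  have dEmFm : dist Em Fm = a * L + b * M - 2 * e := by
    have : e = (dist P Em + dist P Fm - dist Em Fm) / 2 := rfl
    rw [dPEm, dPFm] at this
    linarith
  have heε : e < ε := by
    have hea : e ≤ dist P Em := gp_le_left P Em Fm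
    have heb : e ≤ dist P Fm := gp_le_right P Em Fm
    obtain ⟨m, hm1, hm2⟩ := Hgeo P Em e he0 hea
    obtain ⟨m', hm'1, hm'2⟩ := Hgeo P Fm e he0 heb
    have hmm0 : dist m m' = 0 := by
      refine t1 H4 (a := P) (b := Em) (c := Fm) (z := m) (w := m')
        (by rw [hm1, hm2]; ring) (by rw [hm'1, hm'2]; ring)
        (by rw [hm1, hm'1]) ?_
      rw [hm1, dPEm, dPFm, dEmFm]
      linarith
    have hmm : m = m' := by rwa [dist_eq_zero] at hmm0
    have hg' : 0 < transLen σ g⁻¹ := by rw [transLen_inv hσ]; exact hg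
    have hh' : 0 < transLen σ h⁻¹ := by rw [transLen_inv hσ]; exact hh
    have hPg' : P ∈ charSet σ g⁻¹ := by rw [charSet_inv hσ]; exact hPg
    have hPh' : P ∈ charSet σ h⁻¹ := by rw [charSet_inv hσ]; exact hPh
    have hEminv : σ P ((g⁻¹) ^ a) = Em := by rw [inv_pow, ← hEmdef]
    have hFminv : σ P ((h⁻¹) ^ b) = Fm := by rw [inv_pow, ← hFmdef]
    have hmg : m ∈ charSet σ g := by
      rw [← charSet_inv hσ g]
      exact ax_mem hσ H4 Hgeo hg' hPg' (n := a)
        (by rw [hEminv, hm1, hm2]; ring)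
    have hmh : m ∈ charSet σ h := by
      rw [← charSet_inv hσ h]
      refine ax_mem hσ H4 Hgeo hh' hPh' (n := b) ?_
      rw [hFminv, hmm, hm'1, hm'2]; ring
    -- coordinate of m
    have hc1 : dist P m = |coord σ g x P - coord σ g x m| :=
      coord_dist hσ H4 Hgeo hg hxg hPg hmg
    have hc2 : dist m Em = |coord σ g x m - coord σ g x Em| := by
      rw [hEmdef]
      exact coord_dist hσ H4 Hgeo hg hxg hmg hEmmem
    rw [hm1] at hc1
    rw [hm2, dPEm, hEmc] at hc2
    have hcm : coord σ g x m = coord σ g x P - e := by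
      have haL' : 0 < a * L := by linarith
      rcases abs_cases (coord σ g x P - coord σ g x m) with ⟨e1, _⟩ | ⟨e1, _⟩ <;>
        rcases abs_cases (coord σ g x m - (coord σ g x P - a * L)) with ⟨e2, _⟩ | ⟨e2, _⟩ <;>
        linarith
    have := hιle m ⟨hmg, hmh⟩
    rw [hcm] at this
    linarith [hPlt]
  -- the element k
  have haL0 : 0 < a * L := by linarith
  have hbM0 : 0 < b * M := by linarith
  set k := g ^ a * (h ^ b)⁻¹ with hkdef
  set Kp := σ P k with hKpdef
  set Km := σ P k⁻¹ with hKmdef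
  have dPKp : dist P Kp = a * L + b * M - 2 * Δ := by
    have hp := act_pair hσ P (h ^ b) (g ^ a)
    rw [← hkdef] at hp
    rw [hKpdef, ← hp, dist_comm (σ P (h ^ b)) (σ P (g ^ a)), ← hEpdef, ← hFpdef, dEpFp]
  have hV2 : 2 ≤ dist P Kp := by rw [dPKp]; linarith
  have dPKm : dist P Km = dist P Kp := by
    rw [hKmdef, hKpdef, act_dist_inv hσ]
  have dFmKp : dist Fm Kp = a * L := by
    have hp := act_pair hσ P ((h ^ b)⁻¹) k
    have he2 : k * ((h ^ b)⁻¹)⁻¹ = g ^ a := by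
      rw [hkdef, inv_inv, mul_assoc, inv_mul_cancel, mul_one]
    rw [he2] at hp
    rw [hFmdef, hKpdef, hp, ← hEpdef, dPEp]
  have dEmKm : dist Em Km = b * M := by
    have hp := act_pair hσ P ((g ^ a)⁻¹) k⁻¹
    have he2 : k⁻¹ * ((g ^ a)⁻¹)⁻¹ = h ^ b := by
      rw [hkdef, inv_inv, mul_inv_rev, inv_inv, mul_assoc, inv_mul_cancel, mul_one]
    rw [he2] at hp
    rw [hEmdef, hKmdef, hp, ← hFpdef, dPFp]
  have gp1 : gp P Kp Fm = b * M - Δ := by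
    unfold gp
    rw [dPKp, dPFm, dist_comm Kp Fm, dFmKp]; ring
  have gp2 : gp P Km Em = a * L - Δ := by
    unfold gp
    rw [dPKm, dPKp, dPEm, dist_comm Km Em, dEmKm]; ring
  have hY : gp P Em Kp ≤ e := by
    have hum := um H4 P Em Kp Fm
    rw [gp1, ← hedef] at hum
    rcases le_total (gp P Em Kp) (b * M - Δ) with hm | hm
    · rw [min_eq_left hm] at hum; exact hum
    · rw [min_eq_right hm] at hum; linarith
  have hX : gp P Kp Km ≤ e := by
    have hum := um H4 P Kp Km Em
    rw [gp2] at hum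
    have hY' : gp P Kp Em ≤ e := by rw [gp_comm]; exact hY
    rcases le_total (gp P Kp Km) (a * L - Δ) with hm | hm
    · rw [min_eq_left hm] at hum; linarith
    · rw [min_eq_right hm] at hum; linarith
  have hX0 : 0 ≤ gp P Kp Km := gp_nonneg P Kp Km
  have dKK : dist (σ P k⁻¹) (σ P k) = 2 * dist P Kp - 2 * gp P Kp Km := by
    have : gp P Kp Km = (dist P Kp + dist P Km - dist Kp Km) / 2 := rfl
    rw [dPKm, dist_comm Kp Km] at this
    rw [← hKmdef, ← hKpdef]
    linarith
  have hlow : dist P Kp - 2 * e ≤ transLen σ k := by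
    have hlt : dist P (σ P k) < dist (σ P k⁻¹) (σ P k) := by
      rw [dKK, ← hKpdef]
      linarith
    have := transLen_lower hσ H4 hlt
    rw [dKK, ← hKpdef] at this
    linarith
  have hupp : transLen σ k ≤ dist P Kp := by
    rw [hKpdef]
    exact transLen_le P k
  have hℓa : transLen σ (g ^ a) = a * L := transLen_pow hσ H4 Hgeo hg hxg ha1
  have hℓb : transLen σ (h ^ b) = b * M := transLen_pow hσ H4 Hgeo hh hxh hb1
  have h2 : transLen σ k ≤ a * L + b * M - 2 * Δ := by
    rw [← dPKp]; exact hupp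
  have h1 : a * L + b * M - transLen σ k ≤ 2 * Δ + 2 * e := by
    rw [dPKp] at hlow
    linarith
  have hmin : D + 1 ≤ min ((a:ℝ) * L) ((b:ℝ) * M) := le_min haL hbM
  constructor
  · rw [hℓa, hℓb, ← hkdef]
    linarith
  · rw [hℓa, hℓb, ← hkdef]
    linarith
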